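/- Let G be a monoid and let ω be a reassociator making the monoid algebra H = kG into a dual quasi-bialgebra (with its usual algebra and coalgebra structure). Then H has a preantipode if and only if G is a group; in that case a preantipode is given by S(g) = ω(g ⊗ g⁻¹ ⊗ g)⁻¹ g⁻¹ for each g ∈ G. -/

import Mathlib

open TensorProduct LinearMap

noncomputable section

namespace DQB

variable (k : Type*) [CommRing k]
variable (H : Type*) [AddCommGroup H] [Module k H]

/-- Convolution of two `k`-valued functionals on a module `C` equipped with a
comultiplication-like map `δ`. -/
def conv (C : Type*) [AddCommGroup C] [Module k C]
    (δ : C →ₗ[k] C ⊗[k] C) (f g : C →ₗ[k] k) : C →ₗ[k] k :=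
  (LinearMap.mul' k k) ∘ₗ (TensorProduct.map f g) ∘ₗ δ

/-- Convolution `f * g` where `f` is module-valued and `g` is a functional. -/
def convMK (C M : Type*) [AddCommGroup C] [Module k C] [AddCommGroup M] [Module k M]
    (δ : C →ₗ[k] C ⊗[k] C) (f : C →ₗ[k] M) (g : C →ₗ[k] k) : C →ₗ[k] M :=
  (TensorProduct.rid k M).toLinearMap ∘ₗ (TensorProduct.map f g) ∘ₗ δ

/-- Convolution `g * f` where `g` is a functional and `f` is module-valued. -/
def convKM (C M : Type*) [AddCommGroup C] [Module k C] [AddCommGroup M] [Module k M]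
    (δ : C →ₗ[k] C ⊗[k] C) (g : C →ₗ[k] k) (f : C →ₗ[k] M) : C →ₗ[k] M :=
  (TensorProduct.lid k M).toLinearMap ∘ₗ (TensorProduct.map g f) ∘ₗ δ

/-- `(a ⊗ b) ⊗ c ↦ (a ⊗ c) ⊗ b`. -/
def exch (A B C : Type*) [AddCommGroup A] [Module k A] [AddCommGroup B] [Module k B]
    [AddCommGroup C] [Module k C] : (A ⊗[k] B) ⊗[k] C →ₗ[k] (A ⊗[k] C) ⊗[k] B :=
  (TensorProduct.assoc k A C B).symm.toLinearMap
    ∘ₗ lTensor A (TensorProduct.comm k B C).toLinearMap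
    ∘ₗ (TensorProduct.assoc k A B C).toLinearMap

/-- `a ⊗ (b ⊗ c) ↦ b ⊗ (a ⊗ c)`. -/
def exch' (A B C : Type*) [AddCommGroup A] [Module k A] [AddCommGroup B] [Module k B]
    [AddCommGroup C] [Module k C] : A ⊗[k] (B ⊗[k] C) →ₗ[k] B ⊗[k] (A ⊗[k] C) :=
  (TensorProduct.assoc k B A C).toLinearMap
    ∘ₗ rTensor C (TensorProduct.comm k A B).toLinearMap
    ∘ₗ (TensorProduct.assoc k A B C).symm.toLinearMap

variable (Δ : H →ₗ[k] H ⊗[k] H) (ε : H →ₗ[k] k)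

/-- `h ↦ h₁ ⊗ (h₂ ⊗ h₃)`. -/
def comul2 : H →ₗ[k] H ⊗[k] (H ⊗[k] H) := (lTensor H Δ) ∘ₗ Δ

/-- The codiagonal comultiplication of `H ⊗ H`. -/
def comulT : H ⊗[k] H →ₗ[k] (H ⊗[k] H) ⊗[k] (H ⊗[k] H) :=
  (TensorProduct.tensorTensorTensorComm k H H H H).toLinearMap ∘ₗ TensorProduct.map Δ Δ

/-- The codiagonal comultiplication of `H ⊗ (H ⊗ H)`. -/
def comul3 : H ⊗[k] (H ⊗[k] H) →ₗ[k] (H ⊗[k] (H ⊗[k] H)) ⊗[k] (H ⊗[k] (H ⊗[k] H)) :=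
  (TensorProduct.tensorTensorTensorComm k H H (H ⊗[k] H) (H ⊗[k] H)).toLinearMap
    ∘ₗ TensorProduct.map Δ (comulT k H Δ)

/-- The codiagonal comultiplication of `H ⊗ (H ⊗ (H ⊗ H))`. -/
def comul4 : H ⊗[k] (H ⊗[k] (H ⊗[k] H)) →ₗ[k]
    (H ⊗[k] (H ⊗[k] (H ⊗[k] H))) ⊗[k] (H ⊗[k] (H ⊗[k] (H ⊗[k] H))) :=
  (TensorProduct.tensorTensorTensorComm k H H
      (H ⊗[k] (H ⊗[k] H)) (H ⊗[k] (H ⊗[k] H))).toLinearMap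
    ∘ₗ TensorProduct.map Δ (comul3 k H Δ)

/-- The codiagonal counit of `H ⊗ H`. -/
def counit2 : H ⊗[k] H →ₗ[k] k := (LinearMap.mul' k k) ∘ₗ TensorProduct.map ε ε

/-- The codiagonal counit of `H ⊗ (H ⊗ H)`. -/
def counit3 : H ⊗[k] (H ⊗[k] H) →ₗ[k] k :=
  (LinearMap.mul' k k) ∘ₗ TensorProduct.map ε (counit2 k H ε)

variable (μ : H ⊗[k] H →ₗ[k] H) (e : H) (ω ωInv : H ⊗[k] (H ⊗[k] H) →ₗ[k] k)

/-- A dual quasi-bialgebra structure on `H`, with comultiplication `Δ`, counit `ε`,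
multiplication `μ` (a coalgebra map, unitary and quasi-associative), unit `e`, and
unital 3-cocycle `ω` with convolution inverse `ωInv`. -/
structure IsDualQuasiBialgebra : Prop where
  coassoc : (TensorProduct.assoc k H H H).toLinearMap ∘ₗ (rTensor H Δ) ∘ₗ Δ =
    (lTensor H Δ) ∘ₗ Δ
  counit_comul : (TensorProduct.lid k H).toLinearMap ∘ₗ (rTensor H ε) ∘ₗ Δ = LinearMap.id
  comul_counit : (TensorProduct.rid k H).toLinearMap ∘ₗ (lTensor H ε) ∘ₗ Δ = LinearMap.id
  mul_comul : Δ ∘ₗ μ = (TensorProduct.map μ μ)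
    ∘ₗ (TensorProduct.tensorTensorTensorComm k H H H H).toLinearMap ∘ₗ TensorProduct.map Δ Δ
  mul_counit : ε ∘ₗ μ = counit2 k H ε
  comul_one : Δ e = e ⊗ₜ[k] e
  counit_one : ε e = 1
  one_mul : ∀ h : H, μ (e ⊗ₜ[k] h) = h
  mul_one : ∀ h : H, μ (h ⊗ₜ[k] e) = h
  omega_invL : conv k (H ⊗[k] (H ⊗[k] H)) (comul3 k H Δ) ω ωInv = counit3 k H ε
  omega_invR : conv k (H ⊗[k] (H ⊗[k] H)) (comul3 k H Δ) ωInv ω = counit3 k H ε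
  omega_unital₁ : ∀ h l : H, ω (e ⊗ₜ[k] (h ⊗ₜ[k] l)) = ε h * ε l
  omega_unital₂ : ∀ h l : H, ω (h ⊗ₜ[k] (e ⊗ₜ[k] l)) = ε h * ε l
  omega_unital₃ : ∀ h l : H, ω (h ⊗ₜ[k] (l ⊗ₜ[k] e)) = ε h * ε l
  quasi_assoc : convMK k (H ⊗[k] (H ⊗[k] H)) H (comul3 k H Δ) (μ ∘ₗ lTensor H μ) ω =
    convKM k (H ⊗[k] (H ⊗[k] H)) H (comul3 k H Δ) ω
      (μ ∘ₗ rTensor H μ ∘ₗ (TensorProduct.assoc k H H H).symm.toLinearMap)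
  cocycle : conv k (H ⊗[k] (H ⊗[k] (H ⊗[k] H))) (comul4 k H Δ)
      (ω ∘ₗ lTensor H (lTensor H μ))
      (ω ∘ₗ rTensor (H ⊗[k] H) μ ∘ₗ (TensorProduct.assoc k H H (H ⊗[k] H)).symm.toLinearMap) =
    conv k (H ⊗[k] (H ⊗[k] (H ⊗[k] H))) (comul4 k H Δ)
      (conv k (H ⊗[k] (H ⊗[k] (H ⊗[k] H))) (comul4 k H Δ)
        ((LinearMap.mul' k k) ∘ₗ TensorProduct.map ε ω)
        (ω ∘ₗ lTensor H (rTensor H μ ∘ₗ (TensorProduct.assoc k H H H).symm.toLinearMap)))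
      ((LinearMap.mul' k k) ∘ₗ TensorProduct.map ω ε
        ∘ₗ (TensorProduct.assoc k H (H ⊗[k] H) H).symm.toLinearMap
        ∘ₗ lTensor H (TensorProduct.assoc k H H H).symm.toLinearMap)

/-- A preantipode `S` for a dual quasi-bialgebra. -/
structure IsPreantipode (S : H →ₗ[k] H) : Prop where
  cond1 : (rTensor H μ) ∘ₗ exch k H H H ∘ₗ (rTensor H (Δ ∘ₗ S)) ∘ₗ Δ =
    (TensorProduct.mk k H H e) ∘ₗ S
  cond2 : (lTensor H μ) ∘ₗ exch' k H H H ∘ₗ (lTensor H (Δ ∘ₗ S)) ∘ₗ Δ =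
    ((TensorProduct.mk k H H).flip e) ∘ₗ S
  cond3 : ω ∘ₗ (lTensor H (rTensor H S)) ∘ₗ comul2 k H Δ = ε

end DQB
namespace DQB
variable (k : Type*) [CommRing k] (G : Type*) [Monoid G]

/-- The grouplike comultiplication of a monoid algebra. -/
def maComul : MonoidAlgebra k G →ₗ[k] MonoidAlgebra k G ⊗[k] MonoidAlgebra k G :=
  Finsupp.lsum k (fun g => LinearMap.toSpanSingleton k _
    ((MonoidAlgebra.single g (1 : k)) ⊗ₜ[k] (MonoidAlgebra.single g (1 : k))))
    ∘ₗ (MonoidAlgebra.coeffLinearEquiv k).toLinearMap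

/-- The counit of a monoid algebra. -/
def maCounit : MonoidAlgebra k G →ₗ[k] k :=
  Finsupp.lsum k (fun (_ : G) => (LinearMap.id : k →ₗ[k] k))
    ∘ₗ (MonoidAlgebra.coeffLinearEquiv k).toLinearMap

/-- The multiplication of a monoid algebra as a linear map. -/
def maMul : MonoidAlgebra k G ⊗[k] MonoidAlgebra k G →ₗ[k] MonoidAlgebra k G :=
  LinearMap.mul' k (MonoidAlgebra k G)

end DQB
namespace DQBAux
set_option linter.unusedSectionVars false
open DQB TensorProduct LinearMap

variable {k : Type*} [Field k] {G : Type*} [Monoid G]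

lemma ma_single (g : G) (r : k) :
    (MonoidAlgebra.single g r : MonoidAlgebra k G) = MonoidAlgebra.ofCoeff (Finsupp.single g r) := rfl

lemma maComul_single (g : G) (r : k) :
    maComul k G (MonoidAlgebra.single g r) =
      MonoidAlgebra.single g r ⊗ₜ[k] MonoidAlgebra.single g (1:k) := by
  rw [maComul, LinearMap.comp_apply]
  simp only [LinearEquiv.coe_coe, MonoidAlgebra.coeffLinearEquiv_apply, MonoidAlgebra.coeff_single]
  erw [Finsupp.lsum_single,
    LinearMap.toSpanSingleton_apply, smul_tmul']
  congr 1
  rw [MonoidAlgebra.smul_single', mul_one]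

lemma maCounit_single (g : G) (r : k) : maCounit k G (MonoidAlgebra.single g r) = r := by
  rw [maCounit, LinearMap.comp_apply]
  simp only [LinearEquiv.coe_coe, MonoidAlgebra.coeffLinearEquiv_apply, MonoidAlgebra.coeff_single]
  erw [Finsupp.lsum_single]; rfl

lemma maMul_single (g h : G) (r s : k) :
    maMul k G (MonoidAlgebra.single g r ⊗ₜ[k] MonoidAlgebra.single h s) =
      MonoidAlgebra.single (g*h) (r*s) := by
  rw [maMul, LinearMap.mul'_apply]
  exact MonoidAlgebra.single_mul_single ..

lemma single_smul (g : G) (r : k) :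
    (MonoidAlgebra.single g r : MonoidAlgebra k G) = r • MonoidAlgebra.single g (1:k) := by
  rw [MonoidAlgebra.smul_single', mul_one]

lemma comulT_single (a b : G) :
    comulT k (MonoidAlgebra k G) (maComul k G)
      (MonoidAlgebra.single a (1:k) ⊗ₜ[k] MonoidAlgebra.single b (1:k)) =
    (MonoidAlgebra.single a (1:k) ⊗ₜ[k] MonoidAlgebra.single b (1:k)) ⊗ₜ[k]
      (MonoidAlgebra.single a (1:k) ⊗ₜ[k] MonoidAlgebra.single b (1:k)) := by
  simp [comulT, maComul_single]

lemma comul3_single (a b c : G) :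
    comul3 k (MonoidAlgebra k G) (maComul k G)
      (MonoidAlgebra.single a (1:k) ⊗ₜ[k]
        (MonoidAlgebra.single b (1:k) ⊗ₜ[k] MonoidAlgebra.single c (1:k))) =
    (MonoidAlgebra.single a (1:k) ⊗ₜ[k]
        (MonoidAlgebra.single b (1:k) ⊗ₜ[k] MonoidAlgebra.single c (1:k))) ⊗ₜ[k]
    (MonoidAlgebra.single a (1:k) ⊗ₜ[k]
        (MonoidAlgebra.single b (1:k) ⊗ₜ[k] MonoidAlgebra.single c (1:k))) := by
  simp [comul3, comulT_single, maComul_single]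

lemma counit3_single (a b c : G) :
    counit3 k (MonoidAlgebra k G) (maCounit k G)
      (MonoidAlgebra.single a (1:k) ⊗ₜ[k]
        (MonoidAlgebra.single b (1:k) ⊗ₜ[k] MonoidAlgebra.single c (1:k))) = 1 := by
  simp [counit3, counit2, maCounit_single]

lemma conv_apply_of {C : Type*} [AddCommGroup C] [Module k C] (δ : C →ₗ[k] C ⊗[k] C)
    (f g : C →ₗ[k] k) (x : C) (hx : δ x = x ⊗ₜ[k] x) :
    conv k C δ f g x = f x * g x := by
  simp [conv, hx]

end DQBAux
namespace DQBAux
set_option linter.unusedSectionVars false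
open DQB TensorProduct LinearMap
variable {k : Type*} [Field k] {G : Type*} [Monoid G]

lemma ma_lhom_ext {N : Type*} [AddCommGroup N] [Module k N]
    {φ ψ : MonoidAlgebra k G →ₗ[k] N}
    (h : ∀ (a : G) (b : k), φ (MonoidAlgebra.single a b) = ψ (MonoidAlgebra.single a b)) :
    φ = ψ :=
  MonoidAlgebra.lhom_ext' fun x => LinearMap.ext fun b => h x b
end DQBAux
namespace DQBAux
set_option linter.unusedSectionVars false
open DQB TensorProduct LinearMap
variable {k : Type*} [Field k] {G : Type*} [Monoid G]

/-- Pairing `single a r ⊗ single b s ↦ single (a,b) (r*s)`. -/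
noncomputable def pair : MonoidAlgebra k G ⊗[k] MonoidAlgebra k G →ₗ[k] ((G × G) →₀ k) :=
  TensorProduct.lift ((Finsupp.lsum k fun a =>
    LinearMap.toSpanSingleton k (MonoidAlgebra k G →ₗ[k] ((G × G) →₀ k))
      ((Finsupp.lsum k fun b =>
        LinearMap.toSpanSingleton k ((G × G) →₀ k) (Finsupp.single (a, b) (1:k)))
          ∘ₗ (MonoidAlgebra.coeffLinearEquiv k).toLinearMap))
    ∘ₗ (MonoidAlgebra.coeffLinearEquiv k).toLinearMap)

lemma pair_single (a b : G) (r s : k) :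
    pair (MonoidAlgebra.single a r ⊗ₜ[k] MonoidAlgebra.single b s) =
      Finsupp.single (a, b) (r * s) := by
  rw [pair, TensorProduct.lift.tmul, LinearMap.comp_apply]
  simp only [LinearEquiv.coe_coe, MonoidAlgebra.coeffLinearEquiv_apply, MonoidAlgebra.coeff_single]
  erw [Finsupp.lsum_single, LinearMap.toSpanSingleton_apply, LinearMap.smul_apply]
  rw [LinearMap.comp_apply]
  simp only [LinearEquiv.coe_coe, MonoidAlgebra.coeffLinearEquiv_apply, MonoidAlgebra.coeff_single]
  erw [Finsupp.lsum_single, LinearMap.toSpanSingleton_apply]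
  rw [smul_smul]
  rw [Finsupp.smul_single', mul_one]
end DQBAux
namespace DQBAux
set_option linter.unusedSectionVars false
open DQB TensorProduct LinearMap
variable {k : Type*} [Field k] {G : Type*} [Monoid G]

lemma omegaInv_mul_omega (ω ωInv : MonoidAlgebra k G ⊗[k] (MonoidAlgebra k G ⊗[k] MonoidAlgebra k G) →ₗ[k] k)
    (hH : IsDualQuasiBialgebra k (MonoidAlgebra k G)
      (maComul k G) (maCounit k G) (maMul k G) 1 ω ωInv) (g x : G) :
    ωInv (MonoidAlgebra.single g (1:k) ⊗ₜ[k]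
        (MonoidAlgebra.single x (1:k) ⊗ₜ[k] MonoidAlgebra.single g (1:k))) *
      ω (MonoidAlgebra.single g (1:k) ⊗ₜ[k]
        (MonoidAlgebra.single x (1:k) ⊗ₜ[k] MonoidAlgebra.single g (1:k))) = 1 := by
  have h := conv_apply_of (comul3 k (MonoidAlgebra k G) (maComul k G)) ωInv ω
      (MonoidAlgebra.single g (1:k) ⊗ₜ[k]
            (MonoidAlgebra.single x (1:k) ⊗ₜ[k] MonoidAlgebra.single g (1:k)))
      (comul3_single g x g)
  have h2 := LinearMap.congr_fun hH.omega_invR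
      (MonoidAlgebra.single g (1:k) ⊗ₜ[k]
            (MonoidAlgebra.single x (1:k) ⊗ₜ[k] MonoidAlgebra.single g (1:k)))
  exact h.symm.trans (h2.trans (counit3_single g x g))
end DQBAux
namespace DQBAux
set_option linter.unusedSectionVars false
set_option maxHeartbeats 1000000
open DQB TensorProduct LinearMap
variable {k : Type*} [Field k] {G : Type*} [Monoid G]

lemma backward (ω ωInv : MonoidAlgebra k G ⊗[k] (MonoidAlgebra k G ⊗[k] MonoidAlgebra k G) →ₗ[k] k)
    (hH : IsDualQuasiBialgebra k (MonoidAlgebra k G)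
      (maComul k G) (maCounit k G) (maMul k G) 1 ω ωInv)
    (hU : ∀ g : G, IsUnit g) :
    ∃ S, IsPreantipode k (MonoidAlgebra k G)
      (maComul k G) (maCounit k G) (maMul k G) 1 ω S := by
  classical
  choose u hu using hU
  set iv : G → G := fun g => ((u g)⁻¹ : Gˣ) with hivdef
  have hgi : ∀ g : G, g * iv g = 1 := fun g => by
    have h := (u g).mul_inv; rw [hu g] at h; exact h
  have hig : ∀ g : G, iv g * g = 1 := fun g => by
    have h := (u g).inv_mul; rw [hu g] at h; exact h
  set c : G → k := fun g => ωInv (MonoidAlgebra.single g (1:k) ⊗ₜ[k]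
    (MonoidAlgebra.single (iv g) (1:k) ⊗ₜ[k] MonoidAlgebra.single g (1:k))) with hc
  have hkey : ∀ g : G, c g * ω (MonoidAlgebra.single g (1:k) ⊗ₜ[k]
      (MonoidAlgebra.single (iv g) (1:k) ⊗ₜ[k] MonoidAlgebra.single g (1:k))) = 1 :=
    fun g => omegaInv_mul_omega ω ωInv hH g (iv g)
  set S : MonoidAlgebra k G →ₗ[k] MonoidAlgebra k G :=
    Finsupp.lsum k (fun g => LinearMap.toSpanSingleton k _
      (c g • MonoidAlgebra.single (iv g) (1:k)))
      ∘ₗ (MonoidAlgebra.coeffLinearEquiv k).toLinearMap with hSdef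
  have hSv : ∀ (a : G) (b : k), S (MonoidAlgebra.single a b) =
      (b * c a) • MonoidAlgebra.single (iv a) (1:k) := by
    intro a b
    rw [hSdef, LinearMap.comp_apply]
    simp only [LinearEquiv.coe_coe, MonoidAlgebra.coeffLinearEquiv_apply, MonoidAlgebra.coeff_single]
    erw [Finsupp.lsum_single, LinearMap.toSpanSingleton_apply]
    rw [smul_smul]
  refine ⟨S, ?_, ?_, ?_⟩
  · -- cond1
    refine ma_lhom_ext fun a b => ?_
    simp only [coe_comp, Function.comp_apply, maComul_single, map_smul, rTensor_tmul,
      lTensor_tmul, hSv, exch, LinearEquiv.coe_coe, assoc_tmul, assoc_symm_tmul, comm_tmul,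
      maMul_single, mk_apply, flip_apply, smul_tmul', tmul_smul, MonoidAlgebra.smul_single',
      MonoidAlgebra.one_def, hig, mul_one, one_mul]
    rw [single_smul 1 (b * c a), smul_tmul, ← single_smul]
  · -- cond2
    refine ma_lhom_ext fun a b => ?_
    simp only [coe_comp, Function.comp_apply, maComul_single, map_smul, rTensor_tmul,
      lTensor_tmul, hSv, exch', LinearEquiv.coe_coe, assoc_tmul, assoc_symm_tmul, comm_tmul,
      maMul_single, mk_apply, flip_apply, smul_tmul', tmul_smul, MonoidAlgebra.smul_single',
      MonoidAlgebra.one_def, hgi, mul_one, one_mul]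
    rw [single_smul 1 b, tmul_smul, smul_tmul', MonoidAlgebra.smul_single']
  · -- cond3
    refine ma_lhom_ext fun a b => ?_
    simp only [coe_comp, Function.comp_apply, comul2, maComul_single, map_smul, rTensor_tmul,
      lTensor_tmul, hSv, smul_tmul', tmul_smul, MonoidAlgebra.smul_single',
      maCounit_single, mul_one, one_mul]
    rw [single_smul a b, single_smul (iv a) (c a), ← smul_tmul', ← smul_tmul', tmul_smul,
      map_smul, map_smul, smul_eq_mul, smul_eq_mul, hkey a, mul_one]

end DQBAux
namespace DQBAux
set_option linter.unusedSectionVars false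
set_option maxHeartbeats 1000000
open DQB TensorProduct LinearMap
variable {k : Type*} [Field k] {G : Type*} [Monoid G]

lemma forward (ω : MonoidAlgebra k G ⊗[k] (MonoidAlgebra k G ⊗[k] MonoidAlgebra k G) →ₗ[k] k)
    {S : MonoidAlgebra k G →ₗ[k] MonoidAlgebra k G}
    (hS : IsPreantipode k (MonoidAlgebra k G)
      (maComul k G) (maCounit k G) (maMul k G) 1 ω S) (g : G) :
    ∃ x : G, g * x = 1 ∧ x * g = 1 ∧
      S (MonoidAlgebra.single g 1) =
        (ω (MonoidAlgebra.single g (1:k) ⊗ₜ[k]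
          (MonoidAlgebra.single x (1:k) ⊗ₜ[k] MonoidAlgebra.single g (1:k))))⁻¹ •
          MonoidAlgebra.single x (1:k) := by
  classical
  have L1 : (pair : MonoidAlgebra k G ⊗[k] MonoidAlgebra k G →ₗ[k] ((G × G) →₀ k))
      ∘ₗ rTensor (MonoidAlgebra k G) (maMul k G)
      ∘ₗ exch k (MonoidAlgebra k G) (MonoidAlgebra k G) (MonoidAlgebra k G)
      ∘ₗ ((TensorProduct.mk k (MonoidAlgebra k G ⊗[k] MonoidAlgebra k G)
          (MonoidAlgebra k G)).flip (MonoidAlgebra.single g (1:k)))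
      ∘ₗ maComul k G
      = Finsupp.lmapDomain k k (fun y : G => (y * g, y))
        ∘ₗ (MonoidAlgebra.coeffLinearEquiv k).toLinearMap := by
    refine ma_lhom_ext fun x r => ?_
    simp only [coe_comp, Function.comp_apply, flip_apply, mk_apply, maComul_single, exch,
      LinearEquiv.coe_coe, assoc_tmul, lTensor_tmul, comm_tmul, assoc_symm_tmul, rTensor_tmul,
      maMul_single, mul_one, pair_single]
    simp only [LinearEquiv.coe_coe, MonoidAlgebra.coeffLinearEquiv_apply, MonoidAlgebra.coeff_single]
    erw [Finsupp.lmapDomain_apply, Finsupp.mapDomain_single]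
  have R1 : (pair : MonoidAlgebra k G ⊗[k] MonoidAlgebra k G →ₗ[k] ((G × G) →₀ k))
      ∘ₗ (TensorProduct.mk k (MonoidAlgebra k G) (MonoidAlgebra k G)
          (MonoidAlgebra.single (1:G) (1:k)))
      = Finsupp.lmapDomain k k (fun y : G => ((1:G), y))
        ∘ₗ (MonoidAlgebra.coeffLinearEquiv k).toLinearMap := by
    refine ma_lhom_ext fun x r => ?_
    simp only [coe_comp, Function.comp_apply, mk_apply, pair_single]
    simp only [LinearEquiv.coe_coe, MonoidAlgebra.coeffLinearEquiv_apply, MonoidAlgebra.coeff_single]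
    erw [Finsupp.lmapDomain_apply, Finsupp.mapDomain_single]
    rw [one_mul]
  have L2 : (pair : MonoidAlgebra k G ⊗[k] MonoidAlgebra k G →ₗ[k] ((G × G) →₀ k))
      ∘ₗ lTensor (MonoidAlgebra k G) (maMul k G)
      ∘ₗ exch' k (MonoidAlgebra k G) (MonoidAlgebra k G) (MonoidAlgebra k G)
      ∘ₗ (TensorProduct.mk k (MonoidAlgebra k G)
          (MonoidAlgebra k G ⊗[k] MonoidAlgebra k G) (MonoidAlgebra.single g (1:k)))
      ∘ₗ maComul k G
      = Finsupp.lmapDomain k k (fun y : G => (y, g * y))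
        ∘ₗ (MonoidAlgebra.coeffLinearEquiv k).toLinearMap := by
    refine ma_lhom_ext fun x r => ?_
    simp only [coe_comp, Function.comp_apply, mk_apply, maComul_single, exch',
      LinearEquiv.coe_coe, assoc_tmul, lTensor_tmul, comm_tmul, assoc_symm_tmul, rTensor_tmul,
      maMul_single, mul_one, one_mul, pair_single]
    simp only [LinearEquiv.coe_coe, MonoidAlgebra.coeffLinearEquiv_apply, MonoidAlgebra.coeff_single]
    erw [Finsupp.lmapDomain_apply, Finsupp.mapDomain_single]
  have R2 : (pair : MonoidAlgebra k G ⊗[k] MonoidAlgebra k G →ₗ[k] ((G × G) →₀ k))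
      ∘ₗ ((TensorProduct.mk k (MonoidAlgebra k G) (MonoidAlgebra k G)).flip
          (MonoidAlgebra.single (1:G) (1:k)))
      = Finsupp.lmapDomain k k (fun y : G => (y, (1:G)))
        ∘ₗ (MonoidAlgebra.coeffLinearEquiv k).toLinearMap := by
    refine ma_lhom_ext fun x r => ?_
    simp only [coe_comp, Function.comp_apply, mk_apply, flip_apply, pair_single]
    simp only [LinearEquiv.coe_coe, MonoidAlgebra.coeffLinearEquiv_apply, MonoidAlgebra.coeff_single]
    erw [Finsupp.lmapDomain_apply, Finsupp.mapDomain_single]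
    rw [mul_one]
  -- evaluate cond1 at single g 1
  have h1 := LinearMap.congr_fun hS.cond1 (MonoidAlgebra.single g (1:k))
  simp only [coe_comp, Function.comp_apply, maComul_single, rTensor_tmul, mk_apply,
    MonoidAlgebra.one_def] at h1
  have hL1 := LinearMap.congr_fun L1 (S (MonoidAlgebra.single g (1:k)))
  simp only [coe_comp, Function.comp_apply, flip_apply, mk_apply] at hL1
  rw [h1] at hL1
  have hR1 := LinearMap.congr_fun R1 (S (MonoidAlgebra.single g (1:k)))
  simp only [coe_comp, Function.comp_apply, mk_apply] at hR1
  have e1 := hL1.symm.trans hR1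
  -- evaluate cond2 at single g 1
  have h2 := LinearMap.congr_fun hS.cond2 (MonoidAlgebra.single g (1:k))
  simp only [coe_comp, Function.comp_apply, maComul_single, lTensor_tmul, mk_apply,
    flip_apply, MonoidAlgebra.one_def] at h2
  have hL2 := LinearMap.congr_fun L2 (S (MonoidAlgebra.single g (1:k)))
  simp only [coe_comp, Function.comp_apply, mk_apply] at hL2
  rw [h2] at hL2
  have hR2 := LinearMap.congr_fun R2 (S (MonoidAlgebra.single g (1:k)))
  simp only [coe_comp, Function.comp_apply, mk_apply, flip_apply] at hR2
  have e2 := hL2.symm.trans hR2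
  -- evaluate cond3 at single g 1
  have h3 := LinearMap.congr_fun hS.cond3 (MonoidAlgebra.single g (1:k))
  simp only [coe_comp, Function.comp_apply, comul2, maComul_single, lTensor_tmul, rTensor_tmul,
    maCounit_single] at h3
  -- support facts
  have hA : ∀ x : G, (S (MonoidAlgebra.single g (1:k))).coeff x ≠ 0 → x * g = 1 := by
    intro x hx
    by_contra hne
    have inj : Function.Injective (fun y : G => (y * g, y)) := fun a b hab =>
      congrArg Prod.snd hab
    have hv := DFunLike.congr_fun e1 ((x * g, x))
    erw [Finsupp.lmapDomain_apply, Finsupp.lmapDomain_apply] at hv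
    rw [Finsupp.mapDomain_apply inj] at hv
    rw [Finsupp.mapDomain_notin_range] at hv
    · exact hx hv
    · rintro ⟨y, hy⟩
      have hy' : ((1:G), y) = (x * g, x) := hy
      exact hne ((Prod.ext_iff.mp hy').1.symm)
  have hB : ∀ x : G, (S (MonoidAlgebra.single g (1:k))).coeff x ≠ 0 → g * x = 1 := by
    intro x hx
    by_contra hne
    have inj : Function.Injective (fun y : G => (y, g * y)) := fun a b hab =>
      congrArg Prod.fst hab
    have hv := DFunLike.congr_fun e2 ((x, g * x))
    erw [Finsupp.lmapDomain_apply, Finsupp.lmapDomain_apply] at hv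
    rw [Finsupp.mapDomain_apply inj] at hv
    rw [Finsupp.mapDomain_notin_range] at hv
    · exact hx hv
    · rintro ⟨y, hy⟩
      have hy' : (y, (1:G)) = (x, g * x) := hy
      exact hne ((Prod.ext_iff.mp hy').2.symm)
  have hf0 : S (MonoidAlgebra.single g (1:k)) ≠ 0 := by
    intro h0
    rw [h0] at h3
    rw [zero_tmul, tmul_zero, LinearMap.map_zero] at h3
    exact one_ne_zero h3.symm
  obtain ⟨x, hx⟩ : ∃ x : G, (S (MonoidAlgebra.single g (1:k))).coeff x ≠ 0 := by
    by_contra hall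
    push_neg at hall
    exact hf0 (MonoidAlgebra.coeff_injective (Finsupp.ext fun y => hall y))
  have hx1 : x * g = 1 := hA x hx
  have hx2 : g * x = 1 := hB x hx
  have huniq : ∀ y : G, (S (MonoidAlgebra.single g (1:k))).coeff y ≠ 0 → y = x := by
    intro y hy
    have hyg := hA y hy
    calc y = y * (g * x) := by rw [hx2, mul_one]
      _ = y * g * x := by rw [mul_assoc]
      _ = x := by rw [hyg, one_mul]
  have hfs : S (MonoidAlgebra.single g (1:k)) =
      MonoidAlgebra.single x ((S (MonoidAlgebra.single g (1:k))).coeff x) := by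
    apply MonoidAlgebra.coeff_injective
    rw [MonoidAlgebra.coeff_single]
    refine Finsupp.ext fun y => ?_
    by_cases hyx : y = x
    · subst hyx; rw [Finsupp.single_eq_same]
    · rw [Finsupp.single_eq_of_ne' fun hh => hyx hh.symm]
      by_contra hy
      exact hyx (huniq y hy)
  refine ⟨x, hx2, hx1, ?_⟩
  rw [hfs] at h3 ⊢
  rw [single_smul x ((S (MonoidAlgebra.single g (1:k))).coeff x)] at h3 ⊢
  rw [← smul_tmul', tmul_smul, map_smul, smul_eq_mul] at h3
  congr 1
  exact eq_inv_of_mul_eq_one_left h3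

end DQBAux

open DQB TensorProduct LinearMap in
/-- Let `G` be a monoid and `ω` a reassociator making the monoid algebra
`H = kG` into a dual quasi-bialgebra.  Then `H` has a preantipode iff `G` is a group, in
which case any preantipode satisfies `S(g) = ω(g ⊗ g⁻¹ ⊗ g)⁻¹ g⁻¹`. -/
theorem monoidAlgebra_preantipode_iff_group (k : Type*) [Field k] (G : Type*) [Monoid G]
    (ω ωInv : MonoidAlgebra k G ⊗[k] (MonoidAlgebra k G ⊗[k] MonoidAlgebra k G) →ₗ[k] k)
    (hH : IsDualQuasiBialgebra k (MonoidAlgebra k G)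
      (maComul k G) (maCounit k G) (maMul k G) 1 ω ωInv) :
    ((∃ S, IsPreantipode k (MonoidAlgebra k G)
        (maComul k G) (maCounit k G) (maMul k G) 1 ω S) ↔ ∀ g : G, IsUnit g) ∧
    (∀ S, IsPreantipode k (MonoidAlgebra k G)
        (maComul k G) (maCounit k G) (maMul k G) 1 ω S →
      ∀ g h : G, g * h = 1 → h * g = 1 →
        S (MonoidAlgebra.single g 1) =
          (ω (MonoidAlgebra.single g 1 ⊗ₜ[k]
              (MonoidAlgebra.single h 1 ⊗ₜ[k] MonoidAlgebra.single g 1)))⁻¹ •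
            MonoidAlgebra.single h 1) := by
  constructor
  · constructor
    · rintro ⟨S, hS⟩ g
      obtain ⟨x, hgx, hxg, -⟩ := DQBAux.forward ω hS g
      exact ⟨⟨g, x, hgx, hxg⟩, rfl⟩
    · exact DQBAux.backward ω ωInv hH
  · intro S hS g h hgh hhg
    obtain ⟨x, hgx, hxg, hfor⟩ := DQBAux.forward ω hS g
    have hhx : h = x := by
      calc h = 1 * h := (one_mul h).symm
        _ = x * g * h := by rw [hxg]
        _ = x * (g * h) := by rw [mul_assoc]
        _ = x := by rw [hgh, mul_one]
    rw [← hhx] at hfor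
    exact hfor
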